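/- Let G be 2-connected and let A be a set of independent edges such that every circuit of G contains either 0 or exactly 2 edges of A, and G − A is disconnected. Then G − A has exactly two connected components. -/

import Mathlib

open SimpleGraph

universe u v

/-- A circuit of `G` is the edge set of a cycle of `G`. -/
def IsCircuit {V : Type u} (G : SimpleGraph V) (C : Set (Sym2 V)) : Prop :=
  ∃ (x : V) (w : G.Walk x x), w.IsCycle ∧ C = {e | e ∈ w.edges}

/-- The set of vertices covered by a set of edges. -/
def circVerts {V : Type u} (C : Set (Sym2 V)) : Set V :=
  {x | ∃ e ∈ C, x ∈ e}

/-- A set of edges is independent if its edges are pairwise nonadjacent. -/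
def IndepEdges {V : Type u} (A : Set (Sym2 V)) : Prop :=
  ∀ e₁ ∈ A, ∀ e₂ ∈ A, e₁ ≠ e₂ → ∀ x : V, x ∈ e₁ → x ∉ e₂

/-- 2-connected: connected, at least 3 vertices, and deleting any one vertex
leaves the graph connected. -/
def TwoConnected {V : Type u} (G : SimpleGraph V) : Prop :=
  G.Connected ∧ (3 : Cardinal) ≤ Cardinal.mk V ∧
    ∀ x : V, (G.induce {x}ᶜ).Connected

/-- 3-connected: at least 4 vertices and deleting any two vertices leaves
the graph connected. -/
def ThreeConnected {V : Type u} (G : SimpleGraph V) : Prop :=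
  (4 : Cardinal) ≤ Cardinal.mk V ∧
    ∀ x y : V, (G.induce ({x, y} : Set V)ᶜ).Connected

/-- k-connected: more than k vertices and deleting any set of fewer than k
vertices leaves the graph connected. -/
def KConnected {V : Type u} (k : ℕ) (G : SimpleGraph V) : Prop :=
  (k : Cardinal) < Cardinal.mk V ∧
    ∀ s : Set V, s.Finite → Nat.card s < k → (G.induce sᶜ).Connected

/-- The image of a set of edges of `G` under an edge map `f`. -/
def mapEdges {V : Type u} {V' : Type v} (G : SimpleGraph V) (G' : SimpleGraph V')
    (f : G.edgeSet → G'.edgeSet) (C : Set (Sym2 V)) : Set (Sym2 V') :=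
  {e' | ∃ e : G.edgeSet, (e : Sym2 V) ∈ C ∧ (f e : Sym2 V') = e'}

/-- The preimage of a set of edges of `G'` under an edge map `f`. -/
def preimEdges {V : Type u} {V' : Type v} (G : SimpleGraph V) (G' : SimpleGraph V')
    (f : G.edgeSet → G'.edgeSet) (S : Set (Sym2 V')) : Set (Sym2 V) :=
  {e | ∃ he : e ∈ G.edgeSet, (f ⟨e, he⟩ : Sym2 V') ∈ S}

/-- A circuit injection from `G` onto `G'`: an injective, surjective map on
edges carrying every circuit of `G` to a circuit of `G'`, where `G'` has no
isolated vertices. -/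
def IsCircuitInjection {V : Type u} {V' : Type v} (G : SimpleGraph V) (G' : SimpleGraph V')
    (f : G.edgeSet → G'.edgeSet) : Prop :=
  Function.Injective f ∧ Function.Surjective f ∧
    (∀ C : Set (Sym2 V), IsCircuit G C → IsCircuit G' (mapEdges G G' f C)) ∧
    ∀ x : V', ∃ y : V', G'.Adj x y

/-- `G` contains a subgraph of type X with connectors `e₁`, `e₂`, `e₃`:
two vertex-disjoint circuits `CA`, `CB`, edges `e₁ = (a₁,b₁)`, `e₂ = (a₂,b₂)`,
and a path from `a₃` to `b₃` internally disjoint from both circuits, with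
`a₁,a₂,a₃` distinct on `CA` and `b₁,b₂,b₃` distinct on `CB`, and `e₃` an edge
of the path. -/
def IsTypeXWith {V : Type u} (G : SimpleGraph V) (e₁ e₂ e₃ : Sym2 V) : Prop :=
  ∃ (a₁ a₂ a₃ b₁ b₂ b₃ : V) (CA CB : Set (Sym2 V)) (P : G.Walk a₃ b₃),
    IsCircuit G CA ∧ IsCircuit G CB ∧
    Disjoint (circVerts CA) (circVerts CB) ∧
    a₁ ∈ circVerts CA ∧ a₂ ∈ circVerts CA ∧ a₃ ∈ circVerts CA ∧
    b₁ ∈ circVerts CB ∧ b₂ ∈ circVerts CB ∧ b₃ ∈ circVerts CB ∧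
    a₁ ≠ a₂ ∧ a₁ ≠ a₃ ∧ a₂ ≠ a₃ ∧ b₁ ≠ b₂ ∧ b₁ ≠ b₃ ∧ b₂ ≠ b₃ ∧
    G.Adj a₁ b₁ ∧ G.Adj a₂ b₂ ∧ e₁ = s(a₁, b₁) ∧ e₂ = s(a₂, b₂) ∧
    P.IsPath ∧
    (∀ x ∈ P.support, x ≠ a₃ → x ≠ b₃ → x ∉ circVerts CA ∪ circVerts CB) ∧
    e₃ ∈ P.edges

/-- `G` is (all of) a graph of type X with connectors `e₁`, `e₂`, `e₃`. -/
def IsTypeXGraph {V : Type u} (G : SimpleGraph V) (e₁ e₂ e₃ : Sym2 V) : Prop :=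
  ∃ (a₁ a₂ a₃ b₁ b₂ b₃ : V) (CA CB : Set (Sym2 V)) (P : G.Walk a₃ b₃),
    IsCircuit G CA ∧ IsCircuit G CB ∧
    Disjoint (circVerts CA) (circVerts CB) ∧
    a₁ ∈ circVerts CA ∧ a₂ ∈ circVerts CA ∧ a₃ ∈ circVerts CA ∧
    b₁ ∈ circVerts CB ∧ b₂ ∈ circVerts CB ∧ b₃ ∈ circVerts CB ∧
    a₁ ≠ a₂ ∧ a₁ ≠ a₃ ∧ a₂ ≠ a₃ ∧ b₁ ≠ b₂ ∧ b₁ ≠ b₃ ∧ b₂ ≠ b₃ ∧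
    G.Adj a₁ b₁ ∧ G.Adj a₂ b₂ ∧ e₁ = s(a₁, b₁) ∧ e₂ = s(a₂, b₂) ∧
    P.IsPath ∧
    (∀ x ∈ P.support, x ≠ a₃ → x ≠ b₃ → x ∉ circVerts CA ∪ circVerts CB) ∧
    e₃ ∈ P.edges ∧
    G.edgeSet = CA ∪ CB ∪ {e₁, e₂} ∪ {e | e ∈ P.edges}

section Statement17Helpers

open Classical SimpleGraph Walk

variable {V : Type u} {G : SimpleGraph V}

/-- Abbreviation for the connected component of `x` in `G − A`. -/
private def ccm (G : SimpleGraph V) (A : Set (Sym2 V)) (x : V) :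
    (G.deleteEdges A).ConnectedComponent :=
  (G.deleteEdges A).connectedComponentMk x

private lemma comp0 {A : Set (Sym2 V)} {a b : V} (w : G.Walk a b)
    (hw : ∀ e ∈ w.edges, e ∉ A) :
    ∀ x ∈ w.support, ccm G A x = ccm G A a := by
  induction w with
  | nil =>
    intro x hx
    simp only [support_nil, List.mem_singleton] at hx
    subst hx; rfl
  | @cons a c b h w ih =>
    intro x hx
    have hac : ccm G A a = ccm G A c :=
      ConnectedComponent.sound (SimpleGraph.Adj.reachable
        (by rw [SimpleGraph.deleteEdges_adj]; exact ⟨h, hw _ (by simp)⟩))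
    rcases (by simpa using hx : x = a ∨ x ∈ w.support) with rfl | hx'
    · rfl
    · rw [ih (fun e he => hw e (by simp [he])) x hx', ← hac]

private lemma comp1 {A : Set (Sym2 V)} {a b : V} (w : G.Walk a b)
    (hw : w.edges.countP (fun e => decide (e ∈ A)) ≤ 1) :
    ∀ x ∈ w.support, ccm G A x = ccm G A a ∨ ccm G A x = ccm G A b := by
  induction w with
  | nil =>
    intro x hx
    simp only [support_nil, List.mem_singleton] at hx
    subst hx; exact Or.inl rfl
  | @cons a c b h w ih =>
    intro x hx
    rcases (by simpa using hx : x = a ∨ x ∈ w.support) with rfl | hx'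
    · exact Or.inl rfl
    by_cases he : s(a, c) ∈ A
    · have h0 : w.edges.countP (fun e => decide (e ∈ A)) = 0 := by
        rw [edges_cons, List.countP_cons_of_pos (by simpa using he)] at hw
        omega
      have hall : ∀ e ∈ w.edges, e ∉ A := by
        intro e hee heA
        have := List.countP_eq_zero.mp h0 e hee
        simp [heA] at this
      right
      rw [comp0 w hall x hx', ← comp0 w hall b w.end_mem_support]
    · have hac : ccm G A a = ccm G A c :=
        ConnectedComponent.sound (SimpleGraph.Adj.reachable
          (by rw [SimpleGraph.deleteEdges_adj]; exact ⟨h, he⟩))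
      have hw' : w.edges.countP (fun e => decide (e ∈ A)) ≤ 1 := by
        rw [edges_cons, List.countP_cons_of_neg (by simpa using he)] at hw
        omega
      rcases ih hw' x hx' with h' | h'
      · exact Or.inl (h'.trans hac.symm)
      · exact Or.inr h'

private lemma comp2 {A : Set (Sym2 V)} {a b : V} (w : G.Walk a b)
    (hw : w.edges.countP (fun e => decide (e ∈ A)) ≤ 2) :
    ∃ d : V, ∀ x ∈ w.support,
      ccm G A x = ccm G A a ∨ ccm G A x = ccm G A b ∨ ccm G A x = ccm G A d := by
  induction w with
  | nil => exact ⟨a, fun x hx => Or.inl (by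
      simp only [support_nil, List.mem_singleton] at hx; subst hx; rfl)⟩
  | @cons a c b h w ih =>
    by_cases he : s(a, c) ∈ A
    · have h1 : w.edges.countP (fun e => decide (e ∈ A)) ≤ 1 := by
        rw [edges_cons, List.countP_cons_of_pos (by simpa using he)] at hw
        omega
      refine ⟨c, fun x hx => ?_⟩
      rcases (by simpa using hx : x = a ∨ x ∈ w.support) with rfl | hx'
      · exact Or.inl rfl
      rcases comp1 w h1 x hx' with h' | h'
      · exact Or.inr (Or.inr h')
      · exact Or.inr (Or.inl h')
    · have hac : ccm G A a = ccm G A c :=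
        ConnectedComponent.sound (SimpleGraph.Adj.reachable
          (by rw [SimpleGraph.deleteEdges_adj]; exact ⟨h, he⟩))
      have hw' : w.edges.countP (fun e => decide (e ∈ A)) ≤ 2 := by
        rw [edges_cons, List.countP_cons_of_neg (by simpa using he)] at hw
        omega
      obtain ⟨d, hd⟩ := ih hw'
      refine ⟨d, fun x hx => ?_⟩
      rcases (by simpa using hx : x = a ∨ x ∈ w.support) with rfl | hx'
      · exact Or.inl rfl
      rcases hd x hx' with h' | h' | h'
      · exact Or.inl (h'.trans hac.symm)
      · exact Or.inr (Or.inl h')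
      · exact Or.inr (Or.inr h')

private lemma no_three {A : Set (Sym2 V)} {a : V} (w : G.Walk a a)
    (h2 : w.edges.countP (fun e => decide (e ∈ A)) ≤ 2)
    {x y z : V} (hx : x ∈ w.support) (hy : y ∈ w.support) (hz : z ∈ w.support)
    (hxy : ccm G A x ≠ ccm G A y) (hxz : ccm G A x ≠ ccm G A z)
    (hyz : ccm G A y ≠ ccm G A z) : False := by
  obtain ⟨d, hd⟩ := comp2 w h2
  rcases hd x hx with h | h | h <;> rcases hd y hy with h' | h' | h' <;>
    rcases hd z hz with h'' | h'' | h'' <;>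
    first
      | exact hxy (h.trans h'.symm)
      | exact hxz (h.trans h''.symm)
      | exact hyz (h'.trans h''.symm)

private lemma ncard_eq_countP (A : Set (Sym2 V)) (l : List (Sym2 V)) (hl : l.Nodup) :
    ({e | e ∈ l} ∩ A).ncard = l.countP (fun e => decide (e ∈ A)) := by
  have hset : ({e | e ∈ l} ∩ A) = ↑((l.filter (fun e => decide (e ∈ A))).toFinset) := by
    ext e
    simp [List.mem_filter]
  rw [hset, Set.ncard_coe_finset, List.toFinset_card_of_nodup (hl.filter _),
    List.countP_eq_length_filter]

private lemma cycle_countP {A : Set (Sym2 V)}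
    (hcirc : ∀ C : Set (Sym2 V), IsCircuit G C →
      (C ∩ A).ncard = 0 ∨ (C ∩ A).ncard = 2)
    {a : V} {w : G.Walk a a} (hw : w.IsCycle) :
    w.edges.countP (fun e => decide (e ∈ A)) = 0 ∨
      w.edges.countP (fun e => decide (e ∈ A)) = 2 := by
  have h := hcirc _ ⟨a, w, hw, rfl⟩
  rwa [ncard_eq_countP A w.edges hw.edges_nodup] at h

end Statement17Helpers
section Statement17Helpers2

open Classical SimpleGraph Walk

variable {V : Type u} {G : SimpleGraph V}

private lemma walk_avoiding {x : V} (hconn : (G.induce {x}ᶜ).Connected) {a b : V}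
    (ha : a ≠ x) (hb : b ≠ x) : ∃ P : G.Walk a b, x ∉ P.support := by
  have ha' : a ∈ ({x}ᶜ : Set V) := by simpa
  have hb' : b ∈ ({x}ᶜ : Set V) := by simpa
  obtain ⟨W⟩ := hconn ⟨a, ha'⟩ ⟨b, hb'⟩
  refine ⟨W.map (SimpleGraph.Embedding.induce ({x}ᶜ : Set V)).toHom, ?_⟩
  intro hx
  replace hx : x ∈ (W.map (SimpleGraph.Embedding.induce ({x}ᶜ : Set V)).toHom).support := hx
  rw [Walk.support_map, List.mem_map] at hx
  obtain ⟨y, _, hy⟩ := hx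
  have hy' : (y : V) = x := hy
  have hy2 : (y : V) ∈ ({x}ᶜ : Set V) := y.2
  rw [hy'] at hy2
  simp at hy2

private lemma exists_other_neighbor (h2 : TwoConnected G) {u v : V} (huv : u ≠ v) :
    ∃ w : V, G.Adj u w ∧ w ≠ v := by
  by_contra hcon
  push_neg at hcon
  obtain ⟨z, hzu, hzv⟩ := Cardinal.three_le h2.2.1 u v
  obtain ⟨P, hP⟩ := walk_avoiding (h2.2.2 v) huv hzv
  have hnn : ¬P.Nil := Walk.not_nil_of_ne (Ne.symm hzu)
  obtain ⟨w', hadj, P', rfl⟩ := Walk.not_nil_iff.mp hnn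
  refine hP ?_
  rw [← hcon _ hadj]
  simp [P'.start_mem_support]

private lemma exists_first_hit {a b : V} (S : Set V) (P : G.Walk a b) :
    b ∈ S → P.IsPath →
    ∃ (z : V) (Q : G.Walk a z), Q.IsPath ∧ z ∈ S ∧
      (∀ x ∈ Q.support, x ∈ P.support) ∧ (∀ x ∈ Q.support, x ∈ S → x = z) := by
  induction P with
  | nil =>
    intro hb _
    exact ⟨_, Walk.nil, by simp, hb, by simp, fun x hx _ => by simpa using hx⟩
  | @cons a c b h P ih =>
    intro hb hP
    by_cases haS : a ∈ S
    · exact ⟨a, Walk.nil, by simp, haS, by simp, fun x hx _ => by simpa using hx⟩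
    · have hP' : P.IsPath := (Walk.cons_isPath_iff h P).mp hP |>.1
      have haP : a ∉ P.support := ((Walk.cons_isPath_iff h P).mp hP).2
      obtain ⟨z, Q, hQ, hzS, hsub, hlast⟩ := ih hb hP'
      refine ⟨z, Walk.cons h Q, ?_, hzS, ?_, ?_⟩
      · rw [Walk.cons_isPath_iff]
        exact ⟨hQ, fun haQ => haP (hsub a haQ)⟩
      · intro x hx
        rcases (by simpa using hx : x = a ∨ x ∈ Q.support) with rfl | hx'
        · simp
        · simp [hsub x hx']
      · intro x hx hxS
        rcases (by simpa using hx : x = a ∨ x ∈ Q.support) with rfl | hx'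
        · exact absurd hxS haS
        · exact hlast x hx' hxS

private lemma isPath_append {a b c : V} {p : G.Walk a b} {q : G.Walk b c}
    (hp : p.IsPath) (hq : q.IsPath) (h : ∀ x, x ∈ p.support → x ∈ q.support → x = b) :
    (p.append q).IsPath := by
  rw [Walk.isPath_def, Walk.support_append]
  have hqtail : q.support = b :: q.support.tail := q.support_eq_cons
  have hqnodup : q.support.tail.Nodup ∧ b ∉ q.support.tail := by
    have := hq.support_nodup
    rw [hqtail, List.nodup_cons] at this
    exact ⟨this.2, this.1⟩
  refine List.Nodup.append hp.support_nodup hqnodup.1 ?_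
  intro x hxp hxq
  have hxq' : x ∈ q.support := by rw [hqtail]; exact List.mem_cons_of_mem _ hxq
  have := h x hxp hxq'
  subst this
  exact hqnodup.2 hxq

private lemma mem_support_closed_iff {a x : V} (w : G.Walk a a) (hw : ¬w.Nil) :
    x ∈ w.support ↔ x ∈ w.support.tail := by
  constructor
  · intro hx
    rw [Walk.mem_support_iff] at hx
    rcases hx with rfl | h
    · cases w with
      | nil => simp at hw
      | cons h q => simpa using q.end_mem_support
    · exact h
  · intro h
    rw [Walk.mem_support_iff]
    exact Or.inr h

private lemma cycle_not_nil {a : V} {w : G.Walk a a} (hw : w.IsCycle) : ¬w.Nil := by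
  rw [Walk.not_nil_iff_lt_length]
  have := hw.three_le_length
  omega

private lemma mem_support_rotate_iff {a b x : V} {C : G.Walk a a} (hC : C.IsCycle)
    (hb : b ∈ C.support) : x ∈ (C.rotate _ hb).support ↔ x ∈ C.support := by
  rw [mem_support_closed_iff _ (cycle_not_nil (hC.rotate hb)),
    mem_support_closed_iff _ (cycle_not_nil hC),
    (Walk.support_rotate C _ hb).mem_iff]

private lemma cycle_arcs {a : V} {C : G.Walk a a} (hC : C.IsCycle) {z : V}
    (hz : z ∈ C.support) (hza : z ≠ a) :
    ∃ (T : G.Walk a z) (D : G.Walk z a), T.IsPath ∧ D.IsPath ∧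
      (∀ x ∈ T.support, x ∈ C.support) ∧ (∀ x ∈ D.support, x ∈ C.support) ∧
      (∀ u ∈ C.support, u ∈ T.support ∨ u ∈ D.support) ∧
      (∀ e ∈ T.edges, e ∈ C.edges) ∧ (∀ e ∈ D.edges, e ∈ C.edges) := by
  cases C with
  | nil => exact absurd (by simpa using hz) hza
  | @cons a c a' h q =>
    have hqnodup : q.support.Nodup := by
      have := hC.2
      rwa [Walk.support_cons, List.tail_cons] at this
    have hzq : z ∈ q.support := by
      rcases (by simpa using hz : z = a ∨ z ∈ q.support) with rfl | h'
      · exact absurd rfl hza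
      · exact h'
    set T0 := q.takeUntil z hzq with hT0
    set D := q.dropUntil z hzq with hD
    have hspec : T0.append D = q := q.take_spec hzq
    have hsupp : q.support = T0.support ++ D.support.tail := by
      rw [← hspec, Walk.support_append]
    have hnd : T0.support.Nodup ∧ D.support.tail.Nodup ∧
        T0.support.Disjoint D.support.tail := by
      have := hqnodup
      rw [hsupp, List.nodup_append] at this
      exact ⟨this.1, this.2.1, fun _ h1 h2 => this.2.2 _ h1 _ h2 rfl⟩
    have hDpath : D.IsPath := by
      rw [Walk.isPath_def, D.support_eq_cons, List.nodup_cons]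
      constructor
      · intro hmem
        exact hnd.2.2 (T0.end_mem_support) hmem
      · exact hnd.2.1
    have haD : a ∈ D.support.tail := by
      have haD' : a ∈ D.support := D.end_mem_support
      rw [D.support_eq_cons] at haD'
      rcases List.mem_cons.mp haD' with h' | h'
      · exact absurd h'.symm hza
      · exact h'
    have hT0path : T0.IsPath := by
      rw [Walk.isPath_def]
      exact hnd.1
    have haT0 : a ∉ T0.support := fun hmem => hnd.2.2 hmem haD
    refine ⟨Walk.cons h T0, D, ?_, hDpath, ?_, ?_, ?_, ?_, ?_⟩
    · rw [Walk.cons_isPath_iff]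
      exact ⟨hT0path, haT0⟩
    · intro x hx
      rcases (by simpa using hx : x = a ∨ x ∈ T0.support) with rfl | hx'
      · simp
      · rw [Walk.support_cons]
        exact List.mem_cons_of_mem _ (by rw [hsupp]; exact List.mem_append_left _ hx')
    · intro x hx
      rw [D.support_eq_cons] at hx
      rcases List.mem_cons.mp hx with h' | h'
      · subst h'
        rw [Walk.support_cons]
        exact List.mem_cons_of_mem _ hzq
      · rw [Walk.support_cons]
        exact List.mem_cons_of_mem _ (by rw [hsupp]; exact List.mem_append_right _ h')
    · intro u hu
      rcases (by simpa using hu : u = a ∨ u ∈ q.support) with rfl | hu'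
      · left; simp
      · rw [hsupp] at hu'
        rcases List.mem_append.mp hu' with h' | h'
        · left; rw [Walk.support_cons]; exact List.mem_cons_of_mem _ h'
        · right; rw [D.support_eq_cons]; exact List.mem_cons_of_mem _ h'
    · intro e he
      rcases (by simpa using he : e = s(a, c) ∨ e ∈ T0.edges) with rfl | he'
      · simp
      · rw [Walk.edges_cons]
        exact List.mem_cons_of_mem _ (q.edges_takeUntil_subset hzq he')
    · intro e he
      rw [Walk.edges_cons]
      exact List.mem_cons_of_mem _ (q.edges_dropUntil_subset hzq he)

end Statement17Helpers2
section Statement17Helpers3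

open Classical SimpleGraph Walk

variable {V : Type u} {G : SimpleGraph V}

private lemma aedge_comp_ne {A : Set (Sym2 V)}
    (hcirc : ∀ C : Set (Sym2 V), IsCircuit G C → (C ∩ A).ncard = 0 ∨ (C ∩ A).ncard = 2)
    {p q : V} (hpq : s(p, q) ∈ A) (hadj : G.Adj p q) :
    ccm G A p ≠ ccm G A q := by
  intro hco
  have hr : (G.deleteEdges A).Reachable q p := (ConnectedComponent.exact hco).symm
  obtain ⟨P0⟩ := hr
  set P := P0.bypass with hPdef
  have hPpath : P.IsPath := P0.bypass_isPath
  have hsub : ∀ e ∈ P.edges, e ∈ G.edgeSet := by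
    intro e he
    have := P.edges_subset_edgeSet he
    rw [SimpleGraph.edgeSet_deleteEdges] at this
    exact this.1
  have hnA : ∀ e ∈ P.edges, e ∉ A := by
    intro e he
    have := P.edges_subset_edgeSet he
    rw [SimpleGraph.edgeSet_deleteEdges] at this
    exact this.2
  set P' := P.transfer G hsub with hP'def
  have hP'path : P'.IsPath := by
    rw [Walk.isPath_def, hP'def, Walk.support_transfer]
    exact hPpath.support_nodup
  have hce : s(p, q) ∉ P'.edges := by
    rw [hP'def, Walk.edges_transfer]
    exact fun h => hnA _ h hpq
  have hcyc : (Walk.cons hadj P').IsCycle := by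
    rw [Walk.cons_isCycle_iff]
    exact ⟨hP'path, hce⟩
  have h := hcirc _ ⟨p, Walk.cons hadj P', hcyc, rfl⟩
  have hone : ({e | e ∈ (Walk.cons hadj P').edges} ∩ A) = {s(p, q)} := by
    ext e
    simp only [Set.mem_inter_iff, Set.mem_setOf_eq, Set.mem_singleton_iff, Walk.edges_cons,
      List.mem_cons]
    constructor
    · rintro ⟨h1 | h1, h2⟩
      · exact h1
      · exact absurd h2 (by rw [hP'def, Walk.edges_transfer] at h1; exact hnA _ h1)
    · rintro rfl
      exact ⟨Or.inl rfl, hpq⟩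
  rw [hone, Set.ncard_singleton] at h
  omega

private lemma cycle_through_two (h2 : TwoConnected G) :
    ∀ (n : ℕ) (u v : V), u ≠ v → G.dist u v = n →
      ∃ (a : V) (w : G.Walk a a), w.IsCycle ∧ u ∈ w.support ∧ v ∈ w.support := by
  intro n
  induction n using Nat.strong_induction_on with
  | _ n ih =>
    intro u v huv hdist
    have hreach : G.Reachable u v := h2.1.preconnected u v
    rcases n with _ | n
    · exact absurd (hreach.dist_eq_zero_iff.mp hdist) huv
    rcases n with _ | n
    · -- distance 1 : u and v are adjacent
      have hadj : G.Adj u v := SimpleGraph.dist_eq_one_iff_adj.mp hdist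
      obtain ⟨w', hw'adj, hw'v⟩ := exists_other_neighbor h2 huv
      have hw'u : w' ≠ u := hw'adj.ne'
      obtain ⟨P0, hP0⟩ := walk_avoiding (h2.2.2 u) hw'u (Ne.symm huv)
      set W1 := Walk.cons hw'adj P0 with hW1
      have hWb : W1.bypass.IsPath := W1.bypass_isPath
      have hedge : s(v, u) ∉ W1.bypass.edges := by
        intro hmem
        have hmem' := W1.edges_bypass_subset hmem
        rw [hW1, Walk.edges_cons] at hmem'
        rcases List.mem_cons.mp hmem' with h' | h'
        · rcases Sym2.eq_iff.mp h' with ⟨h1, _⟩ | ⟨h1, _⟩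
          · exact huv h1.symm
          · exact hw'v h1.symm
        · exact hP0 (P0.snd_mem_support_of_mem_edges h')
      refine ⟨v, Walk.cons hadj.symm W1.bypass, ?_, ?_, by simp⟩
      · rw [Walk.cons_isCycle_iff]
        exact ⟨hWb, hedge⟩
      · rw [Walk.support_cons]
        exact List.mem_cons_of_mem _ W1.bypass.start_mem_support
    · -- distance ≥ 2
      obtain ⟨p, hp⟩ := hreach.exists_walk_length_eq_dist
      have hnn : ¬p.reverse.Nil := Walk.not_nil_of_ne (Ne.symm huv)
      obtain ⟨w', hadj, q, hq⟩ := Walk.not_nil_iff.mp hnn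
      have hlq : q.length = n + 1 := by
        have hlen := congrArg Walk.length hq
        rw [Walk.length_reverse, hp, hdist, Walk.length_cons] at hlen
        omega
      have hduw : G.dist u w' ≤ n + 1 :=
        le_trans (SimpleGraph.dist_le q.reverse) (by rw [Walk.length_reverse]; omega)
      have huw : u ≠ w' := by
        rintro rfl
        have hle := SimpleGraph.dist_le hadj.symm.toWalk
        rw [hdist] at hle
        simp at hle
      obtain ⟨a, C, hC, huC, hwC⟩ := ih (G.dist u w') (by omega) u w' huw rfl
      by_cases hvC : v ∈ C.support
      · exact ⟨a, C, hC, huC, hvC⟩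
      · set C' := C.rotate _ hwC with hC'def
        have hC' : C'.IsCycle := hC.rotate hwC
        have hmemiff : ∀ s, s ∈ C'.support ↔ s ∈ C.support :=
          fun s => mem_support_rotate_iff hC hwC
        have huC' : u ∈ C'.support := (hmemiff u).mpr huC
        obtain ⟨P0, hP0⟩ := walk_avoiding (h2.2.2 w') hadj.ne huw
        obtain ⟨z, Q, hQpath, hzC', hQsub, hQlast⟩ :=
          exists_first_hit {s | s ∈ C'.support} P0.bypass huC' P0.bypass_isPath
        have hQP0 : ∀ s ∈ Q.support, s ∈ P0.support :=
          fun s hs => P0.support_bypass_subset (hQsub s hs)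
        have hzw : z ≠ w' := fun h => hP0 (h ▸ hQP0 z Q.end_mem_support)
        obtain ⟨T, D, hT, hD, hTs, hDs, hcov, hTe, hDe⟩ := cycle_arcs hC' hzC' hzw
        obtain ⟨R, hRpath, huR, hRs⟩ :
            ∃ R : G.Walk z w', R.IsPath ∧ u ∈ R.support ∧ ∀ s ∈ R.support, s ∈ C'.support := by
          rcases hcov u huC' with h' | h'
          · exact ⟨T.reverse, hT.reverse, by rwa [Walk.support_reverse, List.mem_reverse],
              fun s hs => hTs s (by rwa [Walk.support_reverse, List.mem_reverse] at hs)⟩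
          · exact ⟨D, hD, h', hDs⟩
        set X := R.reverse.append Q.reverse with hXdef
        have hXpath : X.IsPath := by
          apply isPath_append hRpath.reverse hQpath.reverse
          intro s hs1 hs2
          rw [Walk.support_reverse, List.mem_reverse] at hs1 hs2
          exact hQlast s hs2 (hRs s hs1)
        have hedge : s(v, w') ∉ X.edges := by
          intro hmem
          rw [hXdef, Walk.edges_append, List.mem_append] at hmem
          rcases hmem with h' | h'
          · rw [Walk.edges_reverse, List.mem_reverse] at h'
            have hvR : v ∈ R.support := R.fst_mem_support_of_mem_edges h'
            exact hvC ((hmemiff v).mp (hRs v hvR))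
          · rw [Walk.edges_reverse, List.mem_reverse] at h'
            have hwQ : w' ∈ Q.support := Q.snd_mem_support_of_mem_edges h'
            exact hP0 (hQP0 w' hwQ)
        refine ⟨v, Walk.cons hadj X, ?_, ?_, by simp⟩
        · rw [Walk.cons_isCycle_iff]
          exact ⟨hXpath, hedge⟩
        · rw [Walk.support_cons]
          apply List.mem_cons_of_mem
          rw [hXdef, Walk.mem_support_append_iff]
          left
          rwa [Walk.support_reverse, List.mem_reverse]

private lemma cycle_through_vertex_edge (h2 : TwoConnected G) {x y u : V}
    (hxy : G.Adj x y) (hux : u ≠ x) (huy : u ≠ y) :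
    ∃ (b : V) (w : G.Walk b b), w.IsCycle ∧ u ∈ w.support ∧ s(x, y) ∈ w.edges := by
  obtain ⟨a, C0, hC0, huC0, hxC0⟩ := cycle_through_two h2 (G.dist u x) u x hux rfl
  set C := C0.rotate _ hxC0 with hCdef
  have hC : C.IsCycle := hC0.rotate hxC0
  have hmemiff : ∀ s, s ∈ C.support ↔ s ∈ C0.support :=
    fun s => mem_support_rotate_iff hC0 hxC0
  have huC : u ∈ C.support := (hmemiff u).mpr huC0
  by_cases he : s(x, y) ∈ C.edges
  · exact ⟨x, C, hC, huC, he⟩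
  by_cases hyC : y ∈ C.support
  · obtain ⟨T, D, hT, hD, hTs, hDs, hcov, hTe, hDe⟩ := cycle_arcs hC hyC hxy.ne'
    rcases hcov u huC with hu | hu
    · refine ⟨y, Walk.cons hxy.symm T, ?_, ?_, ?_⟩
      · rw [Walk.cons_isCycle_iff]
        refine ⟨hT, fun hmem => he ?_⟩
        have := hTe _ hmem
        rwa [Sym2.eq_swap] at this
      · rw [Walk.support_cons]
        exact List.mem_cons_of_mem _ hu
      · rw [Walk.edges_cons]
        exact List.mem_cons.mpr (Or.inl Sym2.eq_swap)
    · refine ⟨x, Walk.cons hxy D, ?_, ?_, ?_⟩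
      · rw [Walk.cons_isCycle_iff]
        exact ⟨hD, fun hmem => he (hDe _ hmem)⟩
      · rw [Walk.support_cons]
        exact List.mem_cons_of_mem _ hu
      · rw [Walk.edges_cons]
        exact List.mem_cons_self
  · obtain ⟨P0, hP0⟩ := walk_avoiding (h2.2.2 x) hxy.ne' hux
    obtain ⟨z, Q, hQpath, hzC, hQsub, hQlast⟩ :=
      exists_first_hit {s | s ∈ C.support} P0.bypass huC P0.bypass_isPath
    have hQP0 : ∀ s ∈ Q.support, s ∈ P0.support :=
      fun s hs => P0.support_bypass_subset (hQsub s hs)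
    have hzx : z ≠ x := fun h => hP0 (h ▸ hQP0 z Q.end_mem_support)
    obtain ⟨T, D, hT, hD, hTs, hDs, hcov, hTe, hDe⟩ := cycle_arcs hC hzC hzx
    obtain ⟨R, hRpath, huR, hRs⟩ :
        ∃ R : G.Walk z x, R.IsPath ∧ u ∈ R.support ∧ ∀ s ∈ R.support, s ∈ C.support := by
      rcases hcov u huC with h' | h'
      · exact ⟨T.reverse, hT.reverse, by rwa [Walk.support_reverse, List.mem_reverse],
          fun s hs => hTs s (by rwa [Walk.support_reverse, List.mem_reverse] at hs)⟩
      · exact ⟨D, hD, h', hDs⟩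
    set X := Q.append R with hXdef
    have hXpath : X.IsPath := by
      apply isPath_append hQpath hRpath
      intro s hs1 hs2
      exact hQlast s hs1 (hRs s hs2)
    have hedge : s(x, y) ∉ X.edges := by
      intro hmem
      rw [hXdef, Walk.edges_append, List.mem_append] at hmem
      rcases hmem with h' | h'
      · exact hP0 (hQP0 x (Q.fst_mem_support_of_mem_edges h'))
      · exact hyC (hRs y (R.snd_mem_support_of_mem_edges h'))
    refine ⟨x, Walk.cons hxy X, ?_, ?_, ?_⟩
    · rw [Walk.cons_isCycle_iff]
      exact ⟨hXpath, hedge⟩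
    · rw [Walk.support_cons]
      apply List.mem_cons_of_mem
      rw [hXdef, Walk.mem_support_append_iff]
      exact Or.inr huR
    · rw [Walk.edges_cons]
      exact List.mem_cons_self

end Statement17Helpers3
/-- If every circuit of a 2-connected graph `G` contains 0 or 2
edges of an independent edge set `A`, and `G − A` is disconnected, then `G − A`
has exactly two components. -/
theorem statement17 {V : Type u} (G : SimpleGraph V) (h2 : TwoConnected G)
    (A : Set (Sym2 V)) (hA : A ⊆ G.edgeSet) (hInd : IndepEdges A)
    (hcirc : ∀ C : Set (Sym2 V), IsCircuit G C →
      (C ∩ A).ncard = 0 ∨ (C ∩ A).ncard = 2)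
    (hdis : ¬(G.deleteEdges A).Connected) :
    ∃ c₁ c₂ : (G.deleteEdges A).ConnectedComponent, c₁ ≠ c₂ ∧
      ∀ c : (G.deleteEdges A).ConnectedComponent, c = c₁ ∨ c = c₂ := by
  classical
  have hnev : Nonempty V := h2.1.nonempty
  have hpre : ¬(G.deleteEdges A).Preconnected := by
    intro h
    haveI := hnev
    exact hdis (SimpleGraph.Connected.mk h)
  simp only [SimpleGraph.Preconnected, not_forall] at hpre
  obtain ⟨u0, v0, hr⟩ := hpre
  refine ⟨(G.deleteEdges A).connectedComponentMk u0, (G.deleteEdges A).connectedComponentMk v0,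
    fun h => hr (SimpleGraph.ConnectedComponent.exact h), ?_⟩
  intro c
  by_contra hc
  push_neg at hc
  obtain ⟨w0, rfl⟩ := c.exists_rep
  have h1 : ccm G A u0 ≠ ccm G A v0 :=
    fun h => hr (SimpleGraph.ConnectedComponent.exact h)
  have h2' : ccm G A w0 ≠ ccm G A u0 := hc.1
  have h3 : ccm G A w0 ≠ ccm G A v0 := hc.2
  have hvwcc : ccm G A v0 ≠ ccm G A w0 := fun h => h3 h.symm
  have hvw : v0 ≠ w0 := fun h => hvwcc (by rw [h])
  obtain ⟨a, C, hC, hvC, hwC⟩ := cycle_through_two h2 (G.dist v0 w0) v0 w0 hvw rfl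
  have hcnt2 : C.edges.countP (fun e => decide (e ∈ A)) = 2 := by
    rcases cycle_countP hcirc hC with h0 | hc2
    · exfalso
      have hall : ∀ e ∈ C.edges, e ∉ A := by
        intro e hee heA
        have := List.countP_eq_zero.mp h0 e hee
        simp [heA] at this
      have hv := comp0 C hall v0 hvC
      have hw := comp0 C hall w0 hwC
      exact hvwcc (hv.trans hw.symm)
    · exact hc2
  have hpos : 0 < C.edges.countP (fun e => decide (e ∈ A)) := by omega
  obtain ⟨f, hfC, hfA'⟩ := List.countP_pos_iff.mp hpos
  have hfA : f ∈ A := by simpa using hfA'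
  clear hfA'
  revert hfC hfA
  induction f using Sym2.ind with
  | _ p q =>
    intro hfC hfA
    have hadjpq : G.Adj p q := (SimpleGraph.mem_edgeSet G).mp (hA hfA)
    have hpqne : ccm G A p ≠ ccm G A q := aedge_comp_ne hcirc hfA hadjpq
    have hpC : p ∈ C.support := C.fst_mem_support_of_mem_edges hfC
    have hqC : q ∈ C.support := C.snd_mem_support_of_mem_edges hfC
    obtain ⟨d, hd⟩ := comp2 (A := A) C (by omega)
    have hd' : ∀ s ∈ C.support, ccm G A s = ccm G A a ∨ ccm G A s = ccm G A d := by
      intro s hs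
      rcases hd s hs with h | h | h
      · exact Or.inl h
      · exact Or.inl h
      · exact Or.inr h
    have hpair : ∀ s ∈ C.support, ccm G A s = ccm G A v0 ∨ ccm G A s = ccm G A w0 := by
      intro s hs
      rcases hd' s hs with h | h <;> rcases hd' v0 hvC with hv | hv <;>
        rcases hd' w0 hwC with hw | hw
      all_goals first
        | exact Or.inl (h.trans hv.symm)
        | exact Or.inr (h.trans hw.symm)
        | exact absurd (hv.trans hw.symm) hvwcc
    have hup : ccm G A u0 ≠ ccm G A p := by
      rcases hpair p hpC with h | h
      · rw [h]; exact h1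
      · rw [h]; exact fun hh => h2' hh.symm
    have huq : ccm G A u0 ≠ ccm G A q := by
      rcases hpair q hqC with h | h
      · rw [h]; exact h1
      · rw [h]; exact fun hh => h2' hh.symm
    have hu0p : u0 ≠ p := fun h => hup (by rw [h])
    have hu0q : u0 ≠ q := fun h => huq (by rw [h])
    obtain ⟨b, D, hD, huD, heD⟩ := cycle_through_vertex_edge h2 hadjpq hu0p hu0q
    have hcntD : D.edges.countP (fun e => decide (e ∈ A)) ≤ 2 := by
      rcases cycle_countP hcirc hD with h | h <;> omega
    exact no_three D hcntD huD (D.fst_mem_support_of_mem_edges heD)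
      (D.snd_mem_support_of_mem_edges heD) hup huq hpqne
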